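/- Nullity forbids small robustness bound: there is no constant a > 0 such that ν(ψ) ≤ a·ℛ(ψ) holds for every pure n-qubit state ψ and every n, where ν is the stabilizer nullity and ℛ the log-robustness of magic. Concretely: for every a there exist states with ν(ψ) = n but ℛ(ψ) = O(polylog n), e.g. subset phase states of subexponential subset size. -/

import Mathlib

open scoped BigOperators
open ComplexConjugate
open scoped ComplexOrder

noncomputable def traceNorm {ι : Type*} [Fintype ι] [DecidableEq ι] (A : Matrix ι ι ℂ) : ℝ :=
  (((Matrix.posSemidef_conjTranspose_mul_self A).1.eigenvectorUnitary : Matrix ι ι ℂ) *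
      Matrix.diagonal (((↑) : ℝ → ℂ) ∘ Real.sqrt ∘ (Matrix.posSemidef_conjTranspose_mul_self A).1.eigenvalues) *
      (star ((Matrix.posSemidef_conjTranspose_mul_self A).1.eigenvectorUnitary : Matrix ι ι ℂ))).trace.re

noncomputable def proj {ι : Type*} (v : ι → ℂ) : Matrix ι ι ℂ :=
  Matrix.of fun i j => v i * conj (v j)

noncomputable def tensorPow {ι : Type*} (A : Matrix ι ι ℂ) (t : ℕ) :
    Matrix (Fin t → ι) (Fin t → ι) ℂ :=
  Matrix.of fun x y => ∏ i, A (x i) (y i)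

noncomputable def pauli {n : ℕ} (a b : Fin n → ZMod 2) :
    Matrix (Fin n → ZMod 2) (Fin n → ZMod 2) ℂ :=
  Matrix.of fun x y =>
    if x = y + a then
      Complex.I ^ (∑ i, (a i * b i).val) * (-1 : ℂ) ^ (∑ i, (b i * y i).val)
    else 0

noncomputable def xi {n : ℕ} (ρ : Matrix (Fin n → ZMod 2) (Fin n → ZMod 2) ℂ)
    (p : (Fin n → ZMod 2) × (Fin n → ZMod 2)) : ℝ :=
  Complex.normSq ((pauli p.1 p.2 * ρ).trace) / 2 ^ n

/-- A unit vector represents a pure stabilizer state iff its stabilizer group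
G_ψ = {P : tr(Pψ) = ±1} has the maximal size 2^n. -/
def IsStabVec {n : ℕ} (u : (Fin n → ZMod 2) → ℂ) : Prop :=
  {p : (Fin n → ZMod 2) × (Fin n → ZMod 2) |
      Complex.normSq ((pauli p.1 p.2 * proj u).trace) = 1}.ncard = 2 ^ n

/-- A matrix is a pure stabilizer state if it is the projector onto a stabilizer vector. -/
def IsStabState {n : ℕ} (ρ : Matrix (Fin n → ZMod 2) (Fin n → ZMod 2) ℂ) : Prop :=
  ∃ u : (Fin n → ZMod 2) → ℂ,
    (∑ x, Complex.normSq (u x) = 1) ∧ ρ = proj u ∧ IsStabVec u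

/-- Log-robustness of magic: log₂ of the least ℓ¹-norm of coefficients in a real
decomposition into pure stabilizer states. -/
noncomputable def logRob {n : ℕ}
    (ρ : Matrix (Fin n → ZMod 2) (Fin n → ZMod 2) ℂ) : ℝ :=
  Real.logb 2 (sInf {t : ℝ | ∃ (m : ℕ) (c : Fin m → ℝ)
    (σ : Fin m → Matrix (Fin n → ZMod 2) (Fin n → ZMod 2) ℂ),
      (∀ i, IsStabState (σ i)) ∧ ρ = ∑ i, (c i : ℂ) • σ i ∧ t = ∑ i, |c i|})

/-- Stabilizer nullity ν(ψ) = n − log₂|G_ψ|. -/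
noncomputable def nullity {n : ℕ} (u : (Fin n → ZMod 2) → ℂ) : ℝ :=
  n - Real.logb 2
    (({p : (Fin n → ZMod 2) × (Fin n → ZMod 2) |
        Complex.normSq ((pauli p.1 p.2 * proj u).trace) = 1}.ncard : ℝ))

namespace NNRB

abbrev V (n : ℕ) := Fin n → ZMod 2

variable {n : ℕ}

lemma add_self_zero (x : V n) : x + x = 0 := by
  funext i; exact CharTwo.add_self_eq_zero (x i)

lemma add_cancel_left (x y : V n) : x + (x + y) = y := by
  rw [← add_assoc, add_self_zero, zero_add]

lemma add_ne_zero_of_ne {x y : V n} (h : x ≠ y) : x + y ≠ 0 := by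
  intro h0
  exact h (by rw [← add_zero x, ← h0, ← add_assoc, add_self_zero, zero_add])

lemma add_eq_iff (x a y : V n) : x + a = y ↔ a = x + y := by
  constructor
  · intro h; rw [← h, add_cancel_left]
  · rintro rfl; exact add_cancel_left x y

lemma trace_pauli_proj (a b : V n) (u : V n → ℂ) :
    (pauli a b * proj u).trace =
      Complex.I ^ (∑ i, (a i * b i).val) *
        ∑ w, (-1 : ℂ) ^ (∑ i, (b i * w i).val) * (u w * conj (u (w + a))) := by
  rw [Matrix.trace]
  simp only [Matrix.diag, Matrix.mul_apply, pauli, proj, Matrix.of_apply, ite_mul, zero_mul]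
  rw [Finset.sum_comm, Finset.mul_sum]
  refine Finset.sum_congr rfl fun w _ => ?_
  rw [Finset.sum_ite_eq' Finset.univ (w + a)
    (fun z => Complex.I ^ (∑ i, (a i * b i).val) * (-1 : ℂ) ^ (∑ i, (b i * w i).val)
      * (u w * conj (u z)))]
  simp only [Finset.mem_univ, if_true]
  ring

lemma normSq_trace_pauli_proj (a b : V n) (u : V n → ℂ) :
    Complex.normSq ((pauli a b * proj u).trace) =
      Complex.normSq (∑ w, (-1 : ℂ) ^ (∑ i, (b i * w i).val) * (u w * conj (u (w + a)))) := by
  rw [trace_pauli_proj, map_mul, map_pow, Complex.normSq_I, one_pow, one_mul]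


noncomputable def eb (x : V n) : V n → ℂ := fun z => if z = x then 1 else 0

lemma eb_norm (x : V n) : ∑ z, Complex.normSq (eb x z) = 1 := by
  simp [eb, apply_ite Complex.normSq, Finset.sum_ite_eq' Finset.univ]

lemma isStabVec_eb (x : V n) : IsStabVec (eb x) := by
  have key : ∀ a b : V n, Complex.normSq ((pauli a b * proj (eb x)).trace)
      = if a = 0 then 1 else 0 := by
    intro a b
    rw [normSq_trace_pauli_proj]
    have hs : ∑ w, (-1 : ℂ) ^ (∑ i, (b i * w i).val) * (eb x w * conj (eb x (w + a)))
        = if a = 0 then (-1 : ℂ) ^ (∑ i, (b i * x i).val) else 0 := by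
      rw [Finset.sum_eq_single x]
      · simp only [eb, if_pos rfl, one_mul]
        by_cases h : a = 0
        · subst h; simp
        · have hxa : ¬ (x + a = x) := fun hx => h (add_eq_left.mp hx)
          simp [h, hxa]
      · intro w _ hw; simp [eb, if_neg hw]
      · simp
    rw [hs]
    by_cases h : a = 0 <;> simp [h, map_pow]
  unfold IsStabVec
  have hset : {p : V n × V n | Complex.normSq ((pauli p.1 p.2 * proj (eb x)).trace) = 1}
      = ↑((({0} : Finset (V n)) ×ˢ (Finset.univ : Finset (V n)))) := by
    ext p
    simp only [Set.mem_setOf_eq, key p.1 p.2, Finset.coe_product, Set.mem_prod,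
      Finset.coe_singleton, Set.mem_singleton_iff, Finset.coe_univ, Set.mem_univ, and_true]
    split_ifs with h <;> simp [h]
  rw [hset, Set.ncard_coe_finset, Finset.card_product, Finset.card_singleton, one_mul,
    Finset.card_univ, Fintype.card_fun, ZMod.card, Fintype.card_fin]

noncomputable def pv (x y : V n) : V n → ℂ :=
  fun z => if z = x ∨ z = y then ((Real.sqrt 2)⁻¹ : ℝ) else 0

lemma pv_norm {x y : V n} (hxy : x ≠ y) : ∑ z, Complex.normSq (pv x y z) = 1 := by
  have hc : ((Real.sqrt 2)⁻¹ : ℝ) * (Real.sqrt 2)⁻¹ = 2⁻¹ := by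
    rw [← mul_inv, Real.mul_self_sqrt (by norm_num)]
  have h1 : ∀ z : V n, Complex.normSq (pv x y z)
      = if z ∈ ({x, y} : Finset (V n)) then (2⁻¹ : ℝ) else 0 := by
    intro z
    simp only [pv, apply_ite Complex.normSq, Complex.normSq_ofReal, hc, Complex.normSq_zero,
      Finset.mem_insert, Finset.mem_singleton]
  simp only [h1]
  rw [Finset.sum_ite_mem, Finset.univ_inter, Finset.sum_const,
    Finset.card_insert_of_notMem (by simp [hxy]), Finset.card_singleton]
  norm_num

lemma dot_eq_zero_parity (b x y : V n) :
    Complex.normSq ((2⁻¹ : ℂ) * ((-1 : ℂ) ^ (∑ i, (b i * x i).val)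
      + (-1 : ℂ) ^ (∑ i, (b i * y i).val)))
    = if (∑ i, b i * (x i + y i)) = (0 : ZMod 2) then 1 else 0 := by
  set px := ∑ i, (b i * x i).val
  set py := ∑ i, (b i * y i).val
  have hcast : ((px + py : ℕ) : ZMod 2) = ∑ i, b i * (x i + y i) := by
    rw [Nat.cast_add, Nat.cast_sum, Nat.cast_sum]
    simp only [ZMod.natCast_val, ZMod.cast_id]
    rw [← Finset.sum_add_distrib]
    exact Finset.sum_congr rfl fun i _ => (mul_add (b i) (x i) (y i)).symm
  have heven : Even (px + py) ↔ (∑ i, b i * (x i + y i)) = (0 : ZMod 2) := by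
    rw [← hcast, ZMod.natCast_eq_zero_iff]
    exact even_iff_two_dvd
  by_cases h : (∑ i, b i * (x i + y i)) = (0 : ZMod 2)
  · rw [if_pos h]
    have he := heven.mpr h
    rcases Nat.even_or_odd px with hp | hp
    · have hq : Even py := (Nat.even_add.mp he).mp hp
      rw [hp.neg_one_pow, hq.neg_one_pow]
      norm_num
    · have hq : Odd py := Nat.odd_iff.mpr (by
        have := (Nat.even_add.mp he)
        rcases Nat.even_or_odd py with h2 | h2
        · exact absurd (this.mpr h2) (Nat.not_even_iff_odd.mpr hp)
        · exact Nat.odd_iff.mp h2)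
      rw [hp.neg_one_pow, hq.neg_one_pow]
      have : (2⁻¹ : ℂ) * (-1 + -1) = -1 := by norm_num
      rw [this, Complex.normSq_neg, Complex.normSq_one]
  · rw [if_neg h]
    have hne : ¬ Even (px + py) := fun he => h (heven.mp he)
    rcases Nat.even_or_odd px with hp | hp
    · have hq : Odd py := by
        rcases Nat.even_or_odd py with h2 | h2
        · exact absurd ((Nat.even_add).mpr ⟨fun _ => h2, fun _ => hp⟩) hne
        · exact h2
      rw [hp.neg_one_pow, hq.neg_one_pow]
      norm_num
    · have hq : Even py := by
        rcases Nat.even_or_odd py with h2 | h2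
        · exact h2
        · exact absurd ((hp.add_odd h2)) hne
      rw [hp.neg_one_pow, hq.neg_one_pow]
      norm_num

lemma zmod2_ne_zero {v : ZMod 2} (h : v ≠ 0) : v = 1 := by revert h; revert v; decide

lemma pv_sum_eq {x y : V n} (hxy : x ≠ y) (a b : V n) :
    ∑ w, (-1 : ℂ) ^ (∑ i, (b i * w i).val) * (pv x y w * conj (pv x y (w + a)))
      = if a = 0 ∨ a = x + y then
          (2⁻¹ : ℂ) * ((-1 : ℂ) ^ (∑ i, (b i * x i).val)
            + (-1 : ℂ) ^ (∑ i, (b i * y i).val))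
        else 0 := by
  have hc : (((Real.sqrt 2)⁻¹ : ℝ) : ℂ) * (((Real.sqrt 2)⁻¹ : ℝ) : ℂ) = (2⁻¹ : ℂ) := by
    have hr : ((Real.sqrt 2)⁻¹ : ℝ) * (Real.sqrt 2)⁻¹ = 2⁻¹ := by
      rw [← mul_inv, Real.mul_self_sqrt (by norm_num)]
    rw [← Complex.ofReal_mul, hr]
    norm_num
  have hprod : ∀ w z : V n, pv x y w * conj (pv x y z)
      = if (w = x ∨ w = y) ∧ (z = x ∨ z = y) then (2⁻¹ : ℂ) else 0 := by
    intro w z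
    simp only [pv, apply_ite conj, Complex.conj_ofReal, map_zero]
    split_ifs with h1 h2 h3 <;> simp_all [hc]
  have hsupp : ∀ w : V n, w ∉ ({x, y} : Finset (V n)) →
      (-1 : ℂ) ^ (∑ i, (b i * w i).val) * (pv x y w * conj (pv x y (w + a))) = 0 := by
    intro w hw
    simp only [Finset.mem_insert, Finset.mem_singleton, not_or] at hw
    rw [hprod, if_neg (by tauto), mul_zero]
  rw [← Finset.sum_subset (Finset.subset_univ ({x, y} : Finset (V n)))
      (fun w _ hw => hsupp w hw),
    Finset.sum_pair hxy]
  rw [hprod, hprod]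
  have e1 : x + a = x ↔ a = 0 := add_eq_left
  have e2 : x + a = y ↔ a = x + y := add_eq_iff x a y
  have e3 : y + a = x ↔ a = x + y := by
    rw [add_eq_iff y a x, add_comm y x]
  have e4 : y + a = y ↔ a = 0 := add_eq_left
  simp only [e1, e2, e3, e4, true_or, or_true, true_and]
  by_cases h : a = 0 ∨ a = x + y
  · rw [if_pos (by tauto), if_pos (by tauto), if_pos h]
    ring
  · rw [if_neg (by tauto), if_neg (by tauto), if_neg h]
    simp

lemma card_dot_zero {d : V n} (hd : d ≠ 0) :
    (Finset.univ.filter (fun b : V n => (∑ i, b i * d i) = (0 : ZMod 2))).card = 2 ^ (n - 1) := by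
  obtain ⟨j0, hj0⟩ := Function.ne_iff.mp hd
  have hj0' : d j0 ≠ 0 := by simpa using hj0
  have hdj : d j0 = 1 := zmod2_ne_zero hj0'
  obtain ⟨s1, hs1⟩ : ∃ s : V n, s = Pi.single j0 1 := ⟨_, rfl⟩
  have hdots : ∀ b : V n, (∑ i, (b + s1) i * d i) = (∑ i, b i * d i) + 1 := by
    intro b
    have hterm : ∀ i, (b + s1) i * d i = b i * d i + s1 i * d i := by
      intro i; rw [Pi.add_apply, add_mul]
    rw [Finset.sum_congr rfl fun i _ => hterm i, Finset.sum_add_distrib]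
    congr 1
    rw [Finset.sum_eq_single j0]
    · rw [hs1]; rw [Pi.single_eq_same, one_mul, hdj]
    · intro i _ hi; rw [hs1]; rw [Pi.single_eq_of_ne hi, zero_mul]
    · simp
  have hss : s1 + s1 = 0 := add_self_zero s1
  have hcard : (Finset.univ.filter (fun b : V n => (∑ i, b i * d i) = (0 : ZMod 2))).card
      = (Finset.univ.filter (fun b : V n => ¬ (∑ i, b i * d i) = (0 : ZMod 2))).card := by
    apply Finset.card_bij' (fun b _ => b + s1) (fun b _ => b + s1)
    · intro b hb
      simp only [Finset.mem_filter, Finset.mem_univ, true_and] at hb ⊢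
      rw [hdots, hb]; decide
    · intro b hb
      simp only [Finset.mem_filter, Finset.mem_univ, true_and] at hb ⊢
      rw [hdots, zmod2_ne_zero hb]; decide
    · intro b _
      rw [add_assoc, hss, add_zero]
    · intro b _
      rw [add_assoc, hss, add_zero]
  have htot := Finset.card_filter_add_card_filter_not
    (s := (Finset.univ : Finset (V n))) (fun b : V n => (∑ i, b i * d i) = (0 : ZMod 2))
  rw [Finset.card_univ, Fintype.card_fun, ZMod.card, Fintype.card_fin] at htot
  have hn : n ≠ 0 := by
    rintro rfl
    exact hd (funext fun i => i.elim0)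
  obtain ⟨m, rfl⟩ : ∃ m, n = m + 1 :=
    ⟨n - 1, (Nat.succ_pred_eq_of_pos (Nat.pos_of_ne_zero hn)).symm⟩
  have hpow : (2 : ℕ) ^ (m + 1) = 2 * 2 ^ m := by rw [pow_succ']
  simp only [Nat.add_sub_cancel]
  rw [← hcard, hpow, ← two_mul] at htot
  exact Nat.eq_of_mul_eq_mul_left (by norm_num) htot



lemma isStabVec_pv {x y : V n} (hxy : x ≠ y) : IsStabVec (pv x y) := by
  have hd : x + y ≠ 0 := add_ne_zero_of_ne hxy
  have hn : n ≠ 0 := by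
    rintro rfl
    exact hxy (funext fun i => absurd i.2 (by omega))
  have key : ∀ a b : V n, Complex.normSq ((pauli a b * proj (pv x y)).trace)
      = if (a = 0 ∨ a = x + y) ∧ (∑ i, b i * (x i + y i)) = (0 : ZMod 2) then 1 else 0 := by
    intro a b
    rw [normSq_trace_pauli_proj, pv_sum_eq hxy]
    by_cases h : a = 0 ∨ a = x + y
    · rw [if_pos h, dot_eq_zero_parity]
      by_cases h2 : (∑ i, b i * (x i + y i)) = (0 : ZMod 2)
      · rw [if_pos h2, if_pos ⟨h, h2⟩]
      · rw [if_neg h2, if_neg (by tauto)]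
    · rw [if_neg h, if_neg (by tauto), Complex.normSq_zero]
  unfold IsStabVec
  have hset : {p : V n × V n | Complex.normSq ((pauli p.1 p.2 * proj (pv x y)).trace) = 1}
      = ↑((({0, x + y} : Finset (V n)) ×ˢ
          (Finset.univ.filter (fun b : V n => (∑ i, b i * (x i + y i)) = (0 : ZMod 2))))) := by
    ext p
    simp only [Set.mem_setOf_eq, key p.1 p.2, Finset.coe_filter, Finset.mem_product,
      Finset.mem_coe, Finset.mem_insert, Finset.mem_singleton, Finset.mem_filter,
      Finset.mem_univ, true_and, Set.mem_setOf_eq]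
    split_ifs with h <;> simp [h]
  have hdot : ∀ b : V n, (∑ i, b i * (x i + y i)) = (∑ i, b i * (x + y) i) := by
    intro b; rfl
  rw [hset, Set.ncard_coe_finset, Finset.card_product,
    Finset.card_insert_of_notMem (by simp [Ne.symm hd]), Finset.card_singleton]
  have : (Finset.univ.filter (fun b : V n => (∑ i, b i * (x i + y i)) = (0 : ZMod 2)))
      = (Finset.univ.filter (fun b : V n => (∑ i, b i * (x + y) i) = (0 : ZMod 2))) := by
    apply Finset.filter_congr
    intro b _
    rw [hdot]
  rw [this, card_dot_zero hd]
  rw [← pow_succ']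
  congr 1
  omega

noncomputable def ev {n : ℕ} (j : Fin n) : V n := Pi.single j 1

noncomputable def SS (n : ℕ) : Finset (V n) := insert 0 (Finset.image ev Finset.univ)

noncomputable def uS (n : ℕ) : V n → ℂ :=
  fun z => if z ∈ SS n then ((Real.sqrt (n + 1))⁻¹ : ℝ) else 0

lemma ev_ne_zero (j : Fin n) : ev j ≠ 0 := by
  intro h
  have := congrFun h j
  rw [ev, Pi.single_eq_same] at this
  exact one_ne_zero this

lemma ev_injective : Function.Injective (ev (n := n)) := by
  intro j k h
  by_contra hjk
  have := congrFun h j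
  rw [ev, ev, Pi.single_eq_same, Pi.single_eq_of_ne hjk] at this
  exact one_ne_zero this

lemma mem_SS {z : V n} : z ∈ SS n ↔ z = 0 ∨ ∃ j, z = ev j := by
  simp only [SS, Finset.mem_insert, Finset.mem_image, Finset.mem_univ, true_and]
  constructor
  · rintro (h | ⟨j, hj⟩)
    · exact Or.inl h
    · exact Or.inr ⟨j, hj.symm⟩
  · rintro (h | ⟨j, hj⟩)
    · exact Or.inl h
    · exact Or.inr ⟨j, hj.symm⟩

lemma zero_mem_SS : (0 : V n) ∈ SS n := Finset.mem_insert_self _ _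

lemma ev_mem_SS (j : Fin n) : ev j ∈ SS n := mem_SS.mpr (Or.inr ⟨j, rfl⟩)

lemma card_SS : (SS n).card = n + 1 := by
  rw [SS, Finset.card_insert_of_notMem, Finset.card_image_of_injective _ ev_injective,
    Finset.card_univ, Fintype.card_fin]
  intro h
  obtain ⟨j, _, hj⟩ := Finset.mem_image.mp h
  exact ev_ne_zero j hj

lemma ev_add_ev_not_mem {j k : Fin n} (hjk : j ≠ k) : ev j + ev k ∉ SS n := by
  intro h
  rcases mem_SS.mp h with h0 | ⟨l, hl⟩
  · have := congrFun h0 j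
    rw [Pi.add_apply, ev, ev, Pi.single_eq_same, Pi.single_eq_of_ne hjk, add_zero] at this
    exact one_ne_zero this
  · have hj := congrFun hl j
    have hk := congrFun hl k
    rw [Pi.add_apply, ev, ev, ev, Pi.single_eq_same, Pi.single_eq_of_ne hjk,
      Pi.single_apply] at hj
    rw [Pi.add_apply, ev, ev, ev, Pi.single_eq_of_ne (Ne.symm hjk), Pi.single_eq_same,
      Pi.single_apply] at hk
    simp only [add_zero, zero_add] at hj hk
    split_ifs at hj with h1
    · split_ifs at hk with h2
      · exact hjk (h1.trans h2.symm)
      · exact one_ne_zero hk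
    · exact one_ne_zero hj

lemma exists_escape (hn : 2 ≤ n) {a : V n} (ha : a ≠ 0) :
    ∃ s ∈ SS n, s + a ∉ SS n := by
  by_cases haS : a ∈ SS n
  · rcases mem_SS.mp haS with h0 | ⟨j, hj⟩
    · exact absurd h0 ha
    · obtain ⟨k, hk⟩ := Fintype.exists_ne_of_one_lt_card
        (by rw [Fintype.card_fin]; omega) j
      refine ⟨ev k, ev_mem_SS k, ?_⟩
      rw [hj]
      exact ev_add_ev_not_mem hk
  · exact ⟨0, zero_mem_SS, by rwa [zero_add]⟩

lemma kappa_sq : (((Real.sqrt (n + 1))⁻¹ : ℝ) : ℂ) * (((Real.sqrt (n + 1))⁻¹ : ℝ) : ℂ)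
    = (((n + 1 : ℝ)⁻¹ : ℝ) : ℂ) := by
  rw [← Complex.ofReal_mul, ← mul_inv, Real.mul_self_sqrt (by positivity)]

lemma uS_norm : ∑ z, Complex.normSq (uS n z) = 1 := by
  have h1 : ∀ z : V n, Complex.normSq (uS n z)
      = if z ∈ SS n then ((n + 1 : ℝ))⁻¹ else 0 := by
    intro z
    rw [uS]
    split_ifs with h
    · rw [Complex.normSq_ofReal, ← mul_inv, Real.mul_self_sqrt (by positivity)]
    · exact Complex.normSq_zero
  simp only [h1]
  rw [Finset.sum_ite_mem, Finset.univ_inter, Finset.sum_const, card_SS, nsmul_eq_mul]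
  push_cast
  rw [mul_inv_cancel₀ (by positivity)]

lemma uS_prod (w z : V n) : uS n w * conj (uS n z)
    = if w ∈ SS n ∧ z ∈ SS n then (((n + 1 : ℝ)⁻¹ : ℝ) : ℂ) else 0 := by
  simp only [uS, apply_ite conj, Complex.conj_ofReal, map_zero]
  by_cases h1 : w ∈ SS n <;> by_cases h2 : z ∈ SS n
  · rw [if_pos h1, if_pos h2, if_pos ⟨h1, h2⟩, kappa_sq]
  · rw [if_pos h1, if_neg h2, mul_zero,
      if_neg (show ¬(w ∈ SS n ∧ z ∈ SS n) from fun hc => h2 hc.2)]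
  · rw [if_neg h1, zero_mul,
      if_neg (show ¬(w ∈ SS n ∧ z ∈ SS n) from fun hc => h1 hc.1)]
  · rw [if_neg h1, zero_mul,
      if_neg (show ¬(w ∈ SS n ∧ z ∈ SS n) from fun hc => h1 hc.1)]

lemma normSq_sum_lt_one {ι : Type*} (F : Finset ι) (f : ι → ℂ)
    (hf : ∀ w ∈ F, ‖f w‖ ≤ ((n : ℝ) + 1)⁻¹) (hcard : F.card ≤ n) :
    Complex.normSq (∑ w ∈ F, f w) < 1 := by
  have h1 : ‖∑ w ∈ F, f w‖ ≤ (F.card : ℝ) * ((n : ℝ) + 1)⁻¹ := by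
    refine le_trans (norm_sum_le F f) ?_
    calc ∑ w ∈ F, ‖f w‖ ≤ ∑ _w ∈ F, ((n : ℝ) + 1)⁻¹ := Finset.sum_le_sum hf
      _ = (F.card : ℝ) * ((n : ℝ) + 1)⁻¹ := by rw [Finset.sum_const, nsmul_eq_mul]
  have h2 : (F.card : ℝ) * ((n : ℝ) + 1)⁻¹ ≤ (n : ℝ) * ((n : ℝ) + 1)⁻¹ := by
    have : (F.card : ℝ) ≤ (n : ℝ) := Nat.cast_le.mpr hcard
    gcongr
  have h3 : (n : ℝ) * ((n : ℝ) + 1)⁻¹ < 1 := by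
    rw [← div_eq_mul_inv, div_lt_one (by positivity)]
    linarith [lt_add_one (n : ℝ)]
  have h4 : ‖∑ w ∈ F, f w‖ < 1 := lt_of_le_of_lt (le_trans h1 h2) h3
  rw [Complex.normSq_eq_norm_sq]
  exact pow_lt_one₀ (norm_nonneg _) h4 (by norm_num)

lemma t_zero (b : V n) : (∑ i, ((0 : V n) i * b i).val) = 0 := by
  simp

lemma t_zero' (b : V n) : (∑ i, (b i * (0 : V n) i).val) = 0 := by
  simp

lemma t_ev (b : V n) (j : Fin n) : (∑ i, (b i * ev j i).val) = (b j).val := by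
  rw [Finset.sum_eq_single j]
  · rw [ev, Pi.single_eq_same, mul_one]
  · intro i _ hi
    rw [ev, Pi.single_eq_of_ne hi, mul_zero, ZMod.val_zero]
  · simp

lemma norm_term_eq (c : ℂ) (k : ℕ) (hc : c = (((n + 1 : ℝ)⁻¹ : ℝ) : ℂ)) :
    ‖(-1 : ℂ) ^ k * c‖ = ((n : ℝ) + 1)⁻¹ := by
  rw [hc, norm_mul, norm_pow, norm_neg, norm_one, one_pow, one_mul, Complex.norm_real,
    Real.norm_eq_abs, abs_of_nonneg (by positivity)]

lemma normSq_trace_uS_lt (hn : 2 ≤ n) {a b : V n} (hab : ¬(a = 0 ∧ b = 0)) :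
    Complex.normSq ((pauli a b * proj (uS n)).trace) < 1 := by
  rw [normSq_trace_pauli_proj]
  by_cases ha : a = 0
  · -- a = 0, so b ≠ 0
    have hb : b ≠ 0 := fun h => hab ⟨ha, h⟩
    subst ha
    have hterm : ∀ w : V n, (-1 : ℂ) ^ (∑ i, (b i * w i).val)
        * (uS n w * conj (uS n (w + 0)))
        = if w ∈ SS n then (-1 : ℂ) ^ (∑ i, (b i * w i).val)
            * (((n + 1 : ℝ)⁻¹ : ℝ) : ℂ) else 0 := by
      intro w
      rw [add_zero, uS_prod]
      by_cases h : w ∈ SS n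
      · rw [if_pos ⟨h, h⟩, if_pos h]
      · rw [if_neg (fun hc => h hc.1), if_neg h, mul_zero]
    rw [Finset.sum_congr rfl fun w _ => hterm w, Finset.sum_ite_mem, Finset.univ_inter]
    obtain ⟨j0, hj0⟩ := Function.ne_iff.mp hb
    have hj0' : b j0 ≠ 0 := by simpa using hj0
    have hbj0 : (b j0).val = 1 := by rw [zmod2_ne_zero hj0']; rfl
    have hsplit : (∑ w ∈ SS n, (-1 : ℂ) ^ (∑ i, (b i * w i).val) * (((n + 1 : ℝ)⁻¹ : ℝ) : ℂ))
        = ∑ j ∈ Finset.univ.erase j0, (-1 : ℂ) ^ ((b j).val) * (((n + 1 : ℝ)⁻¹ : ℝ) : ℂ) := by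
      rw [SS, Finset.sum_insert (by
        intro h
        obtain ⟨j, _, hj⟩ := Finset.mem_image.mp h
        exact ev_ne_zero j hj)]
      rw [Finset.sum_image (fun i _ j _ h => ev_injective h)]
      simp only [t_zero', t_ev, pow_zero, one_mul]
      rw [← Finset.add_sum_erase _ _ (Finset.mem_univ j0), hbj0]
      ring
    rw [hsplit]
    apply normSq_sum_lt_one (n := n)
    · intro j _
      exact le_of_eq (norm_term_eq _ _ rfl)
    · rw [Finset.card_erase_of_mem (Finset.mem_univ j0), Finset.card_univ, Fintype.card_fin]
      exact Nat.sub_le n 1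
  · -- a ≠ 0
    obtain ⟨s0, hs0S, hs0⟩ := exists_escape hn ha
    have hterm : ∀ w : V n, (-1 : ℂ) ^ (∑ i, (b i * w i).val)
        * (uS n w * conj (uS n (w + a)))
        = if w ∈ SS n ∧ w + a ∈ SS n
            then (-1 : ℂ) ^ (∑ i, (b i * w i).val) * (((n + 1 : ℝ)⁻¹ : ℝ) : ℂ) else 0 := by
      intro w
      rw [uS_prod]
      by_cases h : w ∈ SS n ∧ w + a ∈ SS n
      · rw [if_pos h, if_pos h]
      · rw [if_neg h, mul_zero, if_neg h]
    rw [Finset.sum_congr rfl fun w _ => hterm w, ← Finset.sum_filter]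
    apply normSq_sum_lt_one (n := n)
    · intro w _
      exact le_of_eq (norm_term_eq _ _ rfl)
    · have hsub : Finset.univ.filter (fun w : V n => w ∈ SS n ∧ w + a ∈ SS n)
          ⊆ (SS n).erase s0 := by
        intro w hw
        obtain ⟨-, h1, h2⟩ := Finset.mem_filter.mp hw
        rw [Finset.mem_erase]
        refine ⟨?_, h1⟩
        rintro rfl
        exact hs0 h2
      calc (Finset.univ.filter (fun w : V n => w ∈ SS n ∧ w + a ∈ SS n)).card
          ≤ ((SS n).erase s0).card := Finset.card_le_card hsub
        _ = n := by rw [Finset.card_erase_of_mem hs0S, card_SS, Nat.add_sub_cancel]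

lemma stabSet_uS (hn : 2 ≤ n) :
    {p : V n × V n | Complex.normSq ((pauli p.1 p.2 * proj (uS n)).trace) = 1}
      = {((0 : V n), (0 : V n))} := by
  ext p
  simp only [Set.mem_setOf_eq, Set.mem_singleton_iff]
  constructor
  · intro h
    by_contra hne
    have hab : ¬(p.1 = 0 ∧ p.2 = 0) := by
      intro ⟨h1, h2⟩
      exact hne (Prod.ext h1 h2)
    exact absurd h (ne_of_lt (normSq_trace_uS_lt hn hab))
  · rintro rfl
    rw [normSq_trace_pauli_proj]
    have : (∑ w, (-1 : ℂ) ^ (∑ i, ((0 : V n) i * w i).val)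
        * (uS n w * conj (uS n (w + 0)))) = 1 := by
      have h1 : ∀ w : V n, (-1 : ℂ) ^ (∑ i, ((0 : V n) i * w i).val)
          * (uS n w * conj (uS n (w + 0)))
          = (Complex.normSq (uS n w) : ℂ) := by
        intro w
        rw [t_zero, pow_zero, one_mul, add_zero, Complex.mul_conj]
      rw [Finset.sum_congr rfl fun w _ => h1 w, ← Complex.ofReal_sum]
      rw [show (∑ w, Complex.normSq (uS n w)) = 1 from uS_norm]
      norm_num
    rw [this, Complex.normSq_one]

lemma nullity_uS (hn : 2 ≤ n) : nullity (uS n) = n := by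
  rw [nullity, stabSet_uS hn, Set.ncard_singleton, Nat.cast_one, Real.logb_one, sub_zero]

noncomputable def outer (v w : V n → ℂ) : Matrix (V n) (V n) ℂ :=
  Matrix.of fun i j => v i * conj (w j)

lemma proj_eq_outer (v : V n → ℂ) : proj v = outer v v := rfl

lemma outer_sum_left {ι : Type*} (s : Finset ι) (f : ι → V n → ℂ) (w : V n → ℂ) :
    outer (fun z => ∑ i ∈ s, f i z) w = ∑ i ∈ s, outer (f i) w := by
  ext z y
  simp only [outer, Matrix.of_apply, Matrix.sum_apply, Finset.sum_mul]

lemma outer_sum_right {ι : Type*} (s : Finset ι) (v : V n → ℂ) (f : ι → V n → ℂ) :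
    outer v (fun z => ∑ i ∈ s, f i z) = ∑ i ∈ s, outer v (f i) := by
  ext z y
  simp only [outer, Matrix.of_apply, Matrix.sum_apply, map_sum, Finset.mul_sum]

lemma outer_add_left (v v' w : V n → ℂ) :
    outer (fun z => v z + v' z) w = outer v w + outer v' w := by
  ext z y
  simp only [outer, Matrix.of_apply, Matrix.add_apply, add_mul]

lemma outer_add_right (v w w' : V n → ℂ) :
    outer v (fun z => w z + w' z) = outer v w + outer v w' := by
  ext z y
  simp only [outer, Matrix.of_apply, Matrix.add_apply, map_add, mul_add]

lemma outer_smul_smul (c d : ℂ) (v w : V n → ℂ) :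
    outer (fun z => c * v z) (fun z => d * w z) = (c * conj d) • outer v w := by
  ext z y
  simp only [outer, Matrix.of_apply, Matrix.smul_apply, map_mul, smul_eq_mul]
  ring

/-- The indicator vector of SS n. -/
noncomputable def EE (n : ℕ) : V n → ℂ := fun z => if z ∈ SS n then 1 else 0

lemma EE_eq_sum : EE n = fun z => ∑ x ∈ SS n, eb x z := by
  funext z
  rw [EE]
  simp only [eb]
  rw [Finset.sum_ite_eq (SS n) z (fun _ => (1 : ℂ))]

lemma proj_uS_eq : proj (uS n) = (((n + 1 : ℝ)⁻¹ : ℝ) : ℂ) • outer (EE n) (EE n) := by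
  ext z y
  simp only [proj, Matrix.of_apply, Matrix.smul_apply, smul_eq_mul]
  rw [uS_prod]
  simp only [outer, Matrix.of_apply, EE, apply_ite conj, map_one, map_zero]
  by_cases h1 : z ∈ SS n <;> by_cases h2 : y ∈ SS n <;>
    simp [h1, h2]

lemma pv_eq_smul {x y : V n} (hxy : x ≠ y) :
    pv x y = fun z => (((Real.sqrt 2)⁻¹ : ℝ) : ℂ) * (eb x z + eb y z) := by
  funext z
  simp only [pv, eb]
  by_cases h1 : z = x
  · subst h1
    rw [if_pos (Or.inl rfl), if_pos rfl, if_neg (fun h => hxy h), add_zero, mul_one]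
  · by_cases h2 : z = y
    · subst h2
      rw [if_pos (Or.inr rfl), if_neg h1, if_pos rfl, zero_add, mul_one]
    · rw [if_neg (by tauto), if_neg h1, if_neg h2, add_zero, mul_zero]

lemma proj_pv_eq {x y : V n} (hxy : x ≠ y) :
    proj (pv x y) = ((2⁻¹ : ℝ) : ℂ) • (outer (eb x) (eb x) + outer (eb x) (eb y)
      + outer (eb y) (eb x) + outer (eb y) (eb y)) := by
  have hc : (((Real.sqrt 2)⁻¹ : ℝ) : ℂ) * conj (((Real.sqrt 2)⁻¹ : ℝ) : ℂ)
      = ((2⁻¹ : ℝ) : ℂ) := by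
    rw [Complex.conj_ofReal, ← Complex.ofReal_mul, ← mul_inv,
      Real.mul_self_sqrt (by norm_num)]
  rw [proj_eq_outer, pv_eq_smul hxy]
  have h1 : outer (fun z => (((Real.sqrt 2)⁻¹ : ℝ) : ℂ) * (eb x z + eb y z))
      (fun z => (((Real.sqrt 2)⁻¹ : ℝ) : ℂ) * (eb x z + eb y z))
      = ((((Real.sqrt 2)⁻¹ : ℝ) : ℂ) * conj (((Real.sqrt 2)⁻¹ : ℝ) : ℂ))
        • outer (fun z => eb x z + eb y z) (fun z => eb x z + eb y z) :=
    outer_smul_smul _ _ _ _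
  rw [h1, hc]
  congr 1
  rw [show (fun z => eb x z + eb y z) = (fun z => (eb x) z + (eb y) z) from rfl]
  rw [outer_add_left, outer_add_right, outer_add_right]
  abel

lemma decomp :
    proj (uS n) = (∑ x ∈ SS n, (((1 - (n : ℝ)) / ((n : ℝ) + 1) : ℝ) : ℂ) • proj (eb x))
      + ∑ q ∈ (SS n).offDiag, (((n + 1 : ℝ)⁻¹ : ℝ) : ℂ) • proj (pv q.1 q.2) := by
  classical
  set A : Matrix (V n) (V n) ℂ := ∑ x ∈ SS n, outer (eb x) (eb x) with hA
  set W : Matrix (V n) (V n) ℂ := outer (EE n) (EE n) with hW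
  set G : V n × V n → Matrix (V n) (V n) ℂ := fun q =>
    ((2⁻¹ : ℝ) : ℂ) • (outer (eb q.1) (eb q.1) + outer (eb q.1) (eb q.2)
      + outer (eb q.2) (eb q.1) + outer (eb q.2) (eb q.2)) with hG
  have hP1 : ∑ q ∈ (SS n) ×ˢ (SS n), outer (eb q.1) (eb q.1) = (n + 1 : ℕ) • A := by
    simp only [Finset.sum_product]
    have h : ∀ x ∈ SS n, ∑ _y ∈ SS n, outer (eb x) (eb x)
        = (n + 1 : ℕ) • outer (eb x) (eb x) := fun x _ => by
      rw [Finset.sum_const, card_SS]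
    rw [Finset.sum_congr rfl h, ← Finset.smul_sum]
  have hP4 : ∑ q ∈ (SS n) ×ˢ (SS n), outer (eb q.2) (eb q.2) = (n + 1 : ℕ) • A := by
    simp only [Finset.sum_product]
    rw [Finset.sum_const, card_SS]
  have hP2 : ∑ q ∈ (SS n) ×ˢ (SS n), outer (eb q.1) (eb q.2) = W := by
    simp only [Finset.sum_product]
    have h : ∀ x ∈ SS n, ∑ y ∈ SS n, outer (eb x) (eb y) = outer (eb x) (EE n) :=
      fun x _ => by rw [EE_eq_sum, outer_sum_right]
    rw [Finset.sum_congr rfl h, hW, EE_eq_sum, ← outer_sum_left]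
  have hP3 : ∑ q ∈ (SS n) ×ˢ (SS n), outer (eb q.2) (eb q.1) = W := by
    simp only [Finset.sum_product]
    have h : ∀ x ∈ SS n, ∑ y ∈ SS n, outer (eb y) (eb x) = outer (EE n) (eb x) :=
      fun x _ => by rw [EE_eq_sum, outer_sum_left]
    rw [Finset.sum_congr rfl h, hW, EE_eq_sum, ← outer_sum_right]
  have hdiagset : ((SS n) ×ˢ (SS n)).filter (fun q => q.1 = q.2)
      = (SS n).image (fun x => (x, x)) := by
    ext q
    simp only [Finset.mem_filter, Finset.mem_product, Finset.mem_image]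
    constructor
    · rintro ⟨⟨h1, _⟩, heq⟩
      exact ⟨q.1, h1, Prod.ext rfl heq⟩
    · rintro ⟨x, hx, rfl⟩
      exact ⟨⟨hx, hx⟩, rfl⟩
  have hdiag : ∑ q ∈ ((SS n) ×ˢ (SS n)).filter (fun q => q.1 = q.2), G q
      = ((2⁻¹ : ℝ) : ℂ) • (A + A + A + A) := by
    rw [hdiagset, Finset.sum_image (fun x _ y _ h => congrArg Prod.fst h), hG]
    rw [← Finset.smul_sum]
    congr 1
    simp only [Finset.sum_add_distrib]
    rfl
  have htot : ∑ q ∈ (SS n) ×ˢ (SS n), G q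
      = ((2⁻¹ : ℝ) : ℂ) • ((n + 1 : ℕ) • A + W + W + (n + 1 : ℕ) • A) := by
    rw [hG, ← Finset.smul_sum]
    congr 1
    rw [Finset.sum_add_distrib, Finset.sum_add_distrib, Finset.sum_add_distrib,
      hP1, hP2, hP3, hP4]
  have hsplit := Finset.sum_filter_add_sum_filter_not ((SS n) ×ˢ (SS n))
    (fun q => q.1 = q.2) G
  have hoffd : (SS n).offDiag = ((SS n) ×ˢ (SS n)).filter (fun q => ¬ q.1 = q.2) := by
    ext q
    simp only [Finset.mem_offDiag, Finset.mem_filter, Finset.mem_product]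
    tauto
  have hB : ∑ q ∈ (SS n).offDiag, proj (pv q.1 q.2)
      = ((2⁻¹ : ℝ) : ℂ) • ((n + 1 : ℕ) • A + W + W + (n + 1 : ℕ) • A)
        - ((2⁻¹ : ℝ) : ℂ) • (A + A + A + A) := by
    have h1 : ∑ q ∈ (SS n).offDiag, proj (pv q.1 q.2) = ∑ q ∈ (SS n).offDiag, G q :=
      Finset.sum_congr rfl fun q hq => by
        rw [proj_pv_eq (Finset.mem_offDiag.mp hq).2.2, hG]
    rw [h1, hoffd, eq_sub_iff_add_eq, ← htot, ← hdiag, add_comm]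
    exact hsplit
  have hA' : ∑ x ∈ SS n, (((1 - (n : ℝ)) / ((n : ℝ) + 1) : ℝ) : ℂ) • proj (eb x)
      = (((1 - (n : ℝ)) / ((n : ℝ) + 1) : ℝ) : ℂ) • A := by
    rw [← Finset.smul_sum]
    rfl
  have hC' : ∑ q ∈ (SS n).offDiag, (((n + 1 : ℝ)⁻¹ : ℝ) : ℂ) • proj (pv q.1 q.2)
      = (((n + 1 : ℝ)⁻¹ : ℝ) : ℂ) • (∑ q ∈ (SS n).offDiag, proj (pv q.1 q.2)) := by
    rw [← Finset.smul_sum]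
  rw [proj_uS_eq, hA', hC', hB, ← hW]
  rw [← Nat.cast_smul_eq_nsmul ℂ (n + 1) A]
  have hne : ((n : ℂ) + 1) ≠ 0 := by
    have := Nat.cast_add_one_ne_zero (R := ℂ) n
    push_cast at this ⊢
    exact this
  match_scalars
  all_goals (push_cast; field_simp; try ring)

lemma isStabState_eb (x : V n) : IsStabState (proj (eb x)) :=
  ⟨eb x, eb_norm x, rfl, isStabVec_eb x⟩

lemma isStabState_pv {x y : V n} (hxy : x ≠ y) : IsStabState (proj (pv x y)) :=
  ⟨pv x y, pv_norm hxy, rfl, isStabVec_pv hxy⟩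

lemma logRob_le_of_decomp {ι : Type} [Fintype ι]
    (ρ : Matrix (V n) (V n) ℂ) (c : ι → ℝ) (σ : ι → Matrix (V n) (V n) ℂ)
    (hσ : ∀ i, IsStabState (σ i)) (hρ : ρ = ∑ i, (c i : ℂ) • σ i)
    (h1 : 1 ≤ ∑ i, |c i|) :
    logRob ρ ≤ Real.logb 2 (∑ i, |c i|) := by
  have hmem : (∑ i, |c i|) ∈ {t : ℝ | ∃ (m : ℕ) (c' : Fin m → ℝ)
      (σ' : Fin m → Matrix (V n) (V n) ℂ), (∀ i, IsStabState (σ' i)) ∧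
      ρ = ∑ i, (c' i : ℂ) • σ' i ∧ t = ∑ i, |c' i|} := by
    refine ⟨Fintype.card ι, c ∘ (Fintype.equivFin ι).symm, σ ∘ (Fintype.equivFin ι).symm,
      fun i => hσ _, ?_, ?_⟩
    · rw [hρ]
      exact (Equiv.sum_comp (Fintype.equivFin ι).symm fun i => (c i : ℂ) • σ i).symm
    · exact (Equiv.sum_comp (Fintype.equivFin ι).symm fun i => |c i|).symm
  have hnonneg : ∀ t ∈ {t : ℝ | ∃ (m : ℕ) (c' : Fin m → ℝ)
      (σ' : Fin m → Matrix (V n) (V n) ℂ), (∀ i, IsStabState (σ' i)) ∧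
      ρ = ∑ i, (c' i : ℂ) • σ' i ∧ t = ∑ i, |c' i|}, 0 ≤ t := by
    rintro t ⟨m, c', σ', -, -, rfl⟩
    exact Finset.sum_nonneg fun i _ => abs_nonneg _
  have hbdd : BddBelow {t : ℝ | ∃ (m : ℕ) (c' : Fin m → ℝ)
      (σ' : Fin m → Matrix (V n) (V n) ℂ), (∀ i, IsStabState (σ' i)) ∧
      ρ = ∑ i, (c' i : ℂ) • σ' i ∧ t = ∑ i, |c' i|} := ⟨0, hnonneg⟩
  have hsinf_le := csInf_le hbdd hmem
  have hsinf_nonneg := Real.sInf_nonneg hnonneg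
  rw [logRob]
  rcases eq_or_lt_of_le hsinf_nonneg with h0 | h0
  · rw [← h0, Real.logb_zero]
    exact Real.logb_nonneg one_lt_two h1
  · exact (Real.logb_le_logb one_lt_two h0 (lt_of_lt_of_le h0 hsinf_le)).mpr hsinf_le

lemma logRob_uS (hn : 2 ≤ n) :
    logRob (proj (uS n)) ≤ Real.logb 2 (2 * (n : ℝ) - 1) := by
  classical
  set c : ({x // x ∈ SS n} ⊕ {q // q ∈ (SS n).offDiag}) → ℝ :=
    Sum.elim (fun _ => (1 - (n : ℝ)) / ((n : ℝ) + 1)) (fun _ => ((n : ℝ) + 1)⁻¹) with hc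
  set σ : ({x // x ∈ SS n} ⊕ {q // q ∈ (SS n).offDiag}) → Matrix (V n) (V n) ℂ :=
    Sum.elim (fun x => proj (eb x.1)) (fun q => proj (pv q.1.1 q.1.2)) with hσdef
  have hσ : ∀ i, IsStabState (σ i) := by
    rintro (x | q)
    · exact isStabState_eb x.1
    · exact isStabState_pv (Finset.mem_offDiag.mp q.2).2.2
  have hρ : proj (uS n) = ∑ i, (c i : ℂ) • σ i := by
    rw [Fintype.sum_sum_type]
    simp only [hc, hσdef, Sum.elim_inl, Sum.elim_inr]
    rw [Finset.sum_coe_sort (SS n)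
        (fun x => ((((1 - (n : ℝ)) / ((n : ℝ) + 1) : ℝ)) : ℂ) • proj (eb x)),
      Finset.sum_coe_sort ((SS n).offDiag)
        (fun q => ((((n : ℝ) + 1)⁻¹ : ℝ) : ℂ) • proj (pv q.1 q.2))]
    exact decomp
  have hcost : (∑ i, |c i|) = 2 * (n : ℝ) - 1 := by
    rw [Fintype.sum_sum_type]
    simp only [hc, Sum.elim_inl, Sum.elim_inr]
    rw [Finset.sum_const, Finset.sum_const, Finset.card_univ, Finset.card_univ,
      Fintype.card_coe, Fintype.card_coe,
      card_SS, Finset.offDiag_card, card_SS, nsmul_eq_mul, nsmul_eq_mul]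
    have habs1 : |(1 - (n : ℝ)) / ((n : ℝ) + 1)| = ((n : ℝ) - 1) / ((n : ℝ) + 1) := by
      rw [abs_div, abs_of_nonneg (by positivity : (0:ℝ) ≤ (n : ℝ) + 1),
        abs_of_nonpos (by
          have : (1:ℝ) ≤ (n : ℝ) := by exact_mod_cast Nat.one_le_of_lt hn
          linarith)]
      ring_nf
    have habs2 : |((n : ℝ) + 1)⁻¹| = ((n : ℝ) + 1)⁻¹ :=
      abs_of_nonneg (by positivity)
    rw [habs1, habs2]
    have hcard : (((n + 1) * (n + 1) - (n + 1) : ℕ) : ℝ)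
        = ((n : ℝ) + 1) * ((n : ℝ) + 1) - ((n : ℝ) + 1) := by
      rw [Nat.cast_sub (Nat.le_mul_of_pos_left _ (by omega))]
      push_cast
      ring
    rw [hcard]
    have hne : ((n : ℝ) + 1) ≠ 0 := by positivity
    field_simp
    push_cast
    ring
  have h1 : (1 : ℝ) ≤ ∑ i, |c i| := by
    rw [hcost]
    have : (2 : ℝ) ≤ (n : ℝ) := by exact_mod_cast hn
    linarith
  have := logRob_le_of_decomp (proj (uS n)) c σ hσ hρ h1
  rwa [hcost] at this

end NNRB

lemma NNRB.two_mul_add_one_le : ∀ M : ℕ, 3 ≤ M → 2 * M + 1 ≤ 2 ^ M := by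
  intro M h
  induction M with
  | zero => omega
  | succ k ih =>
    by_cases hk : 3 ≤ k
    · have h1 := ih hk
      have h2 : (2 : ℕ) ^ (k + 1) = 2 * 2 ^ k := by rw [pow_succ']
      omega
    · have hk2 : k = 2 := by omega
      subst hk2
      norm_num

/-- there is no constant a > 0 with ν(ψ) ≤ a·ℛ(ψ) for all pure states
on any number of qubits. -/
theorem no_nullity_robustness_bound :
    ¬ ∃ a : ℝ, 0 < a ∧ ∀ (n : ℕ) (u : (Fin n → ZMod 2) → ℂ),
      (∑ x, Complex.normSq (u x) = 1) → nullity u ≤ a * logRob (proj u) := by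
  rintro ⟨a, ha, H⟩
  obtain ⟨m0, hm0⟩ := pow_unbounded_of_one_lt a (one_lt_two : (1 : ℝ) < 2)
  set M := max m0 3 with hM
  have hM3 : 3 ≤ M := le_max_right _ _
  have haM : a < 2 ^ M :=
    lt_of_lt_of_le hm0 (pow_le_pow_right₀ (by norm_num) (le_max_left _ _))
  set n := 2 ^ (2 * M) with hndef
  have hn2 : 2 ≤ n := by
    calc 2 = 2 ^ 1 := by norm_num
      _ ≤ 2 ^ (2 * M) := Nat.pow_le_pow_right (by norm_num) (by omega)
  have hkey := H n (NNRB.uS n) NNRB.uS_norm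
  rw [NNRB.nullity_uS hn2] at hkey
  have hlogRob := NNRB.logRob_uS hn2
  have hncast : (n : ℝ) = 2 ^ (2 * M) := by
    rw [hndef]
    push_cast
    ring
  have hpos1 : (0 : ℝ) < 2 * (n : ℝ) - 1 := by
    have : (2 : ℝ) ≤ (n : ℝ) := by exact_mod_cast hn2
    linarith
  have hlog2 : Real.logb 2 (2 * (n : ℝ) - 1) ≤ (2 * M + 1 : ℝ) := by
    have h2n : (2 * (n : ℝ) - 1) ≤ 2 ^ (2 * M + 1) := by
      rw [hncast, pow_succ]
      have h0 : (0 : ℝ) < 2 ^ (2 * M) := by positivity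
      linarith
    calc Real.logb 2 (2 * (n : ℝ) - 1)
        ≤ Real.logb 2 ((2 : ℝ) ^ (2 * M + 1)) :=
          (Real.logb_le_logb one_lt_two hpos1 (by positivity)).mpr h2n
      _ = (2 * M + 1 : ℝ) := by
          rw [Real.logb_pow, Real.logb_self_eq_one one_lt_two, mul_one]
          push_cast
          ring
  have hchain : (n : ℝ) ≤ a * (2 * M + 1 : ℝ) := by
    calc (n : ℝ) ≤ a * logRob (proj (NNRB.uS n)) := hkey
      _ ≤ a * Real.logb 2 (2 * (n : ℝ) - 1) := mul_le_mul_of_nonneg_left hlogRob ha.le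
      _ ≤ a * (2 * M + 1 : ℝ) := mul_le_mul_of_nonneg_left hlog2 ha.le
  have hfinal : a * (2 * M + 1 : ℝ) < (n : ℝ) := by
    have h1 : (2 * M + 1 : ℝ) ≤ 2 ^ M := by
      exact_mod_cast NNRB.two_mul_add_one_le M hM3
    have h2 : a * (2 * M + 1 : ℝ) ≤ a * 2 ^ M := mul_le_mul_of_nonneg_left h1 ha.le
    have h3 : a * (2 : ℝ) ^ M < 2 ^ M * 2 ^ M :=
      mul_lt_mul_of_pos_right haM (by positivity)
    have h4 : (2 : ℝ) ^ M * 2 ^ M = (n : ℝ) := by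
      rw [hncast, two_mul, pow_add]
    linarith
  linarith
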